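/- Let G be a symmetric real-valued structured prediction algorithm trained on m samples drawn i.i.d. from D, whose point-wise cost c_τ is τ-smooth and whose point-wise loss satisfies 0 ≤ ℓ_τ(G_S, z, k) ≤ γ for all S, z, k. Suppose G has removal-based function stability Δ̄ holding for every training set (including replaced training sets), and write f = G_S. Then for any δ ∈ (0, 1), with probability at least 1 − δ over the random draw of the training set S, the generalization risk is bounded by R(f) ≤ R_e(f) + 2τΔ̄ + ((4m − 2)τΔ̄ + γ)·√(ln(1/δ)/(2m)). -/

import Mathlib

set_option maxHeartbeats 1000000

open MeasureTheory Finset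
open Real ProbabilityTheory

section Auxiliary


lemma den_pos {p : ℝ} (hp0 : 0 ≤ p) (hp1 : p ≤ 1) (h : ℝ) : 0 < 1 - p + p * exp h := by
  rcases eq_or_lt_of_le hp1 with rfl | hp1
  · simpa using exp_pos h
  · nlinarith [exp_pos h]

lemma hoeffding_core {p : ℝ} (hp0 : 0 ≤ p) (hp1 : p ≤ 1) (h : ℝ) :
    Real.log (1 - p + p * exp h) ≤ p * h + h ^ 2 / 8 := by
  set F : ℝ → ℝ := fun h => p * h + h ^ 2 / 8 - Real.log (1 - p + p * exp h) with hFdef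
  set F' : ℝ → ℝ := fun h => p + h / 4 - p * exp h / (1 - p + p * exp h) with hF'def
  have hden : ∀ x : ℝ, 0 < 1 - p + p * exp x := den_pos hp0 hp1
  have hdenD : ∀ x : ℝ, HasDerivAt (fun h => 1 - p + p * exp h) (p * exp x) x := by
    intro x
    simpa using ((Real.hasDerivAt_exp x).const_mul p).const_add (1 - p)
  have hF : ∀ x : ℝ, HasDerivAt F (F' x) x := by
    intro x
    have hlog : HasDerivAt (fun h => Real.log (1 - p + p * exp h))
        (p * exp x / (1 - p + p * exp x)) x := (hdenD x).log (hden x).ne'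
    have h1 : HasDerivAt (fun h : ℝ => p * h + h ^ 2 / 8) (p + x * 2 / 8) x := by
      have := ((hasDerivAt_id x).const_mul p).add
        (((hasDerivAt_pow 2 x)).div_const 8)
      simpa [mul_comm, Pi.add_def] using this
    have := h1.sub hlog
    refine this.congr_deriv ?_
    simp only [hF'def]; ring
  have hF' : ∀ x : ℝ, HasDerivAt F'
      (1 / 4 - p * exp x * (1 - p) / (1 - p + p * exp x) ^ 2) x := by
    intro x
    have hnum : HasDerivAt (fun h => p * exp h) (p * exp x) x :=
      (Real.hasDerivAt_exp x).const_mul p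
    have hq : HasDerivAt (fun h => p * exp h / (1 - p + p * exp h))
        ((p * exp x * (1 - p + p * exp x) - p * exp x * (p * exp x)) /
          (1 - p + p * exp x) ^ 2) x := hnum.div (hdenD x) (hden x).ne'
    have h1 : HasDerivAt (fun h : ℝ => p + h / 4) (1 / 4) x := by
      simpa using (hasDerivAt_id x).div_const 4 |>.const_add p
    have := h1.sub hq
    refine this.congr_deriv ?_
    ring
  have hF'mono : Monotone F' := by
    apply monotone_of_deriv_nonneg (fun x => (hF' x).differentiableAt)
    intro x
    rw [(hF' x).deriv]
    have hd := hden x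
    have he := exp_pos x
    rw [sub_nonneg, div_le_iff₀ (by positivity)]
    nlinarith [sq_nonneg ((1 - p) - p * exp x)]
  have hF'0 : F' 0 = 0 := by simp [hF'def]
  have hF0 : F 0 = 0 := by simp [hFdef]
  have key : 0 ≤ F h := by
    rcases le_total 0 h with hh | hh
    · have : MonotoneOn F (Set.Ici 0) := by
        apply monotoneOn_of_deriv_nonneg (convex_Ici 0)
          (fun x _ => (hF x).differentiableAt.continuousAt.continuousWithinAt)
          (fun x _ => (hF x).differentiableAt.differentiableWithinAt)
        intro x hx
        rw [(hF x).deriv]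
        rw [← hF'0]
        exact hF'mono (le_of_lt (by simpa using hx))
      have := this (Set.self_mem_Ici) (Set.mem_Ici.2 hh) hh
      simpa [hF0] using this
    · have : AntitoneOn F (Set.Iic 0) := by
        apply antitoneOn_of_deriv_nonpos (convex_Iic 0)
          (fun x _ => (hF x).differentiableAt.continuousAt.continuousWithinAt)
          (fun x _ => (hF x).differentiableAt.differentiableWithinAt)
        intro x hx
        rw [(hF x).deriv]
        rw [← hF'0]
        exact hF'mono (le_of_lt (by simpa using hx))
      have := this (Set.mem_Iic.2 hh) (Set.self_mem_Iic) hh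
      simpa [hF0] using this
  have := key
  simp only [hFdef, sub_nonneg] at this
  linarith

lemma integrable_of_bounded' {α : Type*} [MeasurableSpace α] {ν : Measure α}
    [IsFiniteMeasure ν] {f : α → ℝ} (hf : AEStronglyMeasurable f ν) {C : ℝ}
    (h : ∀ x, |f x| ≤ C) : Integrable f ν :=
  (integrable_const C).mono' hf (Filter.Eventually.of_forall (by simpa using h))

lemma hoeffding_lemma {α : Type*} [MeasurableSpace α] (ν : Measure α)
    [IsProbabilityMeasure ν] {f : α → ℝ} (hf : Measurable f) {a b : ℝ} (hab : a ≤ b)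
    (hfab : ∀ x, a ≤ f x ∧ f x ≤ b) (s : ℝ) :
    ∫ x, exp (s * f x) ∂ν ≤ exp (s * ∫ x, f x ∂ν + s ^ 2 * (b - a) ^ 2 / 8) := by
  have hfint : Integrable f ν := integrable_of_bounded' hf.aestronglyMeasurable
    (C := max |a| |b|) (fun x => abs_le.2 ⟨le_trans (neg_le_neg (le_max_left _ _))
      (le_trans (neg_abs_le a) (hfab x).1), le_trans (hfab x).2 (le_trans (le_abs_self b)
      (le_max_right _ _))⟩)
  rcases eq_or_lt_of_le hab with rfl | hab'
  · have hfa : ∀ x, f x = a := fun x => le_antisymm (hfab x).2 (hfab x).1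
    have h1 : ∫ x, exp (s * f x) ∂ν = exp (s * a) := by
      rw [show (fun x => exp (s * f x)) = fun _ => exp (s * a) by funext x; rw [hfa x]]
      simp
    have h2 : ∫ x, f x ∂ν = a := by
      rw [show f = fun _ => a from funext hfa]; simp
    rw [h1, h2]; simp
  · set M := ∫ x, f x ∂ν with hM
    have hMa : a ≤ M := by
      calc a = ∫ _, a ∂ν := by simp
        _ ≤ M := integral_mono (integrable_const a) hfint (fun x => (hfab x).1)
    have hMb : M ≤ b := by
      calc M ≤ ∫ _, b ∂ν := integral_mono hfint (integrable_const b) (fun x => (hfab x).2)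
        _ = b := by simp
    set p : ℝ := (M - a) / (b - a) with hp
    have hba : (0:ℝ) < b - a := by linarith
    have hp0 : 0 ≤ p := div_nonneg (by linarith) hba.le
    have hp1 : p ≤ 1 := (div_le_one hba).2 (by linarith)
    set h : ℝ := s * (b - a) with hh
    -- pointwise convexity bound
    have hpt : ∀ x, exp (s * f x) ≤
        ((b - f x) * exp (s * a) + (f x - a) * exp (s * b)) / (b - a) := by
      intro x
      have hu : (0:ℝ) ≤ (b - f x) / (b - a) := div_nonneg (by linarith [(hfab x).2]) hba.le
      have hv : (0:ℝ) ≤ (f x - a) / (b - a) := div_nonneg (by linarith [(hfab x).1]) hba.le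
      have huv : (b - f x) / (b - a) + (f x - a) / (b - a) = 1 := by
        field_simp
        ring
      have := convexOn_exp.2 (Set.mem_univ (s * a)) (Set.mem_univ (s * b)) hu hv huv
      simp only [smul_eq_mul] at this
      have harg : (b - f x) / (b - a) * (s * a) + (f x - a) / (b - a) * (s * b) = s * f x := by
        field_simp; ring
      rw [harg] at this
      calc exp (s * f x) ≤ (b - f x) / (b - a) * exp (s * a)
            + (f x - a) / (b - a) * exp (s * b) := this
        _ = ((b - f x) * exp (s * a) + (f x - a) * exp (s * b)) / (b - a) := by ring
    have hrw : ∀ x, ((b - f x) * exp (s * a) + (f x - a) * exp (s * b)) / (b - a)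
        = f x * ((exp (s * b) - exp (s * a)) / (b - a))
          + (b * exp (s * a) - a * exp (s * b)) / (b - a) := by
      intro x; field_simp; ring
    have hint2 : Integrable (fun x => ((b - f x) * exp (s * a) + (f x - a) * exp (s * b)) / (b - a)) ν := by
      rw [show (fun x => ((b - f x) * exp (s * a) + (f x - a) * exp (s * b)) / (b - a))
          = fun x => f x * ((exp (s * b) - exp (s * a)) / (b - a))
            + (b * exp (s * a) - a * exp (s * b)) / (b - a) from funext hrw]
      exact (hfint.mul_const _).add (integrable_const _)
    have hint1 : Integrable (fun x => exp (s * f x)) ν := by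
      apply integrable_of_bounded'
        (Real.measurable_exp.comp (hf.const_mul s)).aestronglyMeasurable
        (C := exp (|s| * max |a| |b|))
      intro x
      show |exp (s * f x)| ≤ _
      rw [abs_of_pos (exp_pos _), exp_le_exp]
      calc s * f x ≤ |s * f x| := le_abs_self _
        _ = |s| * |f x| := abs_mul _ _
        _ ≤ |s| * max |a| |b| := by
            apply mul_le_mul_of_nonneg_left _ (abs_nonneg s)
            rcases le_or_gt 0 (f x) with h' | h'
            · exact le_trans (by rw [abs_of_nonneg h']; exact le_trans (hfab x).2 (le_abs_self b)) (le_max_right _ _)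
            · refine le_trans ?_ (le_max_left _ _)
              rw [abs_of_neg h']
              calc -f x ≤ -a := by linarith [(hfab x).1]
                _ ≤ |a| := neg_le_abs a
    have hIle : ∫ x, exp (s * f x) ∂ν ≤ ((b - M) * exp (s * a) + (M - a) * exp (s * b)) / (b - a) := by
      calc ∫ x, exp (s * f x) ∂ν
          ≤ ∫ x, ((b - f x) * exp (s * a) + (f x - a) * exp (s * b)) / (b - a) ∂ν :=
            integral_mono hint1 hint2 hpt
        _ = ∫ x, (f x * ((exp (s * b) - exp (s * a)) / (b - a))
              + (b * exp (s * a) - a * exp (s * b)) / (b - a)) ∂ν :=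
            integral_congr_ae (Filter.Eventually.of_forall hrw)
        _ = M * ((exp (s * b) - exp (s * a)) / (b - a))
              + (b * exp (s * a) - a * exp (s * b)) / (b - a) := by
            rw [integral_add (hfint.mul_const _) (integrable_const _),
              integral_mul_const, integral_const]
            simp [hM]
        _ = ((b - M) * exp (s * a) + (M - a) * exp (s * b)) / (b - a) := by
            field_simp; ring
    -- algebraic reduction to the core lemma
    have hexpb : exp (s * b) = exp (s * a) * exp h := by
      rw [← exp_add, hh]; ring_nf
    have hform : ((b - M) * exp (s * a) + (M - a) * exp (s * b)) / (b - a)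
        = exp (s * a) * (1 - p + p * exp h) := by
      rw [hexpb, hp]; field_simp; ring
    have hposden : 0 < 1 - p + p * exp h := by
      rcases eq_or_lt_of_le hp1 with hp1' | hp1'
      · rw [← hp1']
        have := exp_pos h
        nlinarith
      · nlinarith [exp_pos h]
    have hcore := hoeffding_core hp0 hp1 h
    have hfin : 1 - p + p * exp h ≤ exp (p * h + h ^ 2 / 8) :=
      (Real.log_le_iff_le_exp hposden).1 hcore
    have hph : s * a + p * h = s * M := by
      rw [hp, hh]; field_simp; ring
    calc ∫ x, exp (s * f x) ∂ν
        ≤ exp (s * a) * (1 - p + p * exp h) := by rw [← hform]; exact hIle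
      _ ≤ exp (s * a) * exp (p * h + h ^ 2 / 8) :=
          mul_le_mul_of_nonneg_left hfin (exp_pos _).le
      _ = exp (s * M + h ^ 2 / 8) := by rw [← exp_add, ← hph]; ring_nf
      _ = exp (s * ∫ x, f x ∂ν + s ^ 2 * (b - a) ^ 2 / 8) := by
          rw [hh, ← hM]; ring_nf

lemma abs_int_le {α : Type*} [MeasurableSpace α] {ν : Measure α} (f : α → ℝ) :
    |∫ x, f x ∂ν| ≤ ∫ x, |f x| ∂ν := by
  simpa [Real.norm_eq_abs] using norm_integral_le_integral_norm (μ := ν) f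

lemma exp_mul_integrable {α : Type*} [MeasurableSpace α] (ν : Measure α)
    [IsFiniteMeasure ν] {f : α → ℝ} (hf : AEStronglyMeasurable f ν) {B : ℝ}
    (hB : ∀ x, |f x| ≤ B) (s : ℝ) : Integrable (fun x => exp (s * f x)) ν := by
  refine integrable_of_bounded' ((Real.continuous_exp.comp
    (continuous_const.mul continuous_id)).comp_aestronglyMeasurable hf)
    (C := exp (|s| * B)) (fun x => ?_)
  have h1 : s * f x ≤ |s| * B := by
    have h2 : s * f x ≤ |s * f x| := le_abs_self _
    rw [abs_mul] at h2
    exact h2.trans (mul_le_mul_of_nonneg_left (hB x) (abs_nonneg s))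
  rw [abs_of_pos (exp_pos _)]
  exact exp_le_exp.2 h1

lemma insertNth_update {Z : Type*} {k : ℕ} (x z' : Z) (r : Fin k → Z) (j : Fin k) :
    ((Fin.last k).insertNth x (Function.update r j z') : Fin (k+1) → Z)
      = Function.update ((Fin.last k).insertNth x r : Fin (k+1) → Z)
          ((Fin.last k).succAbove j) z' := by
  ext t
  refine Fin.succAboveCases (Fin.last k) ?_ ?_ t
  · rw [Fin.insertNth_apply_same,
      Function.update_of_ne (Fin.ne_succAbove (Fin.last k) j), Fin.insertNth_apply_same]
  · intro j'
    rw [Fin.insertNth_apply_succAbove]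
    by_cases hj : j' = j
    · subst hj; simp
    · rw [Function.update_of_ne hj,
        Function.update_of_ne (fun h => hj (Fin.succAbove_right_injective h)),
        Fin.insertNth_apply_succAbove]

lemma mcdiarmid_mgf {Z : Type*} [MeasurableSpace Z] [Nonempty Z] (D : Measure Z)
    [IsProbabilityMeasure D] :
    ∀ (k : ℕ) (f : (Fin k → Z) → ℝ), Measurable f → ∀ (B : ℝ), (∀ S, |f S| ≤ B) →
    ∀ (c : ℝ), 0 ≤ c → (∀ S i z', |f (Function.update S i z') - f S| ≤ c) → ∀ s : ℝ,
    ∫ S, exp (s * f S) ∂(Measure.pi fun _ : Fin k => D)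
      ≤ exp (s * ∫ S, f S ∂(Measure.pi fun _ : Fin k => D) + s ^ 2 * k * c ^ 2 / 8) := by
  intro k
  induction k with
  | zero =>
    intro f hf B hB c hc hdiff s
    have hconst : ∀ S : Fin 0 → Z, f S = f (fun i => i.elim0) := by
      intro S; congr 1; funext i; exact i.elim0
    rw [show (fun S : Fin 0 → Z => exp (s * f S)) = fun _ => exp (s * f (fun i => i.elim0)) by
        funext S; rw [hconst S],
      show f = fun _ => f (fun i => i.elim0) from funext hconst]
    simp
  | succ k IH =>
    intro f hf B hB c hc hdiff s
    set e := MeasurableEquiv.piFinSuccAbove (fun _ : Fin (k + 1) => Z) (Fin.last k) with he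
    set ν : Measure (Fin k → Z) := Measure.pi fun _ : Fin k => D with hν
    set μ : Measure (Fin (k+1) → Z) := Measure.pi fun _ : Fin (k+1) => D with hμ
    have mp := measurePreserving_piFinSuccAbove (fun _ : Fin (k + 1) => D) (Fin.last k)
    have mps : MeasurePreserving e.symm (D.prod ν) μ := mp.symm e
    set ins : Z → (Fin k → Z) → (Fin (k+1) → Z) :=
      fun x r => ((Fin.last k).insertNth x r : Fin (k+1) → Z) with hins
    have hesymm : ∀ p : Z × (Fin k → Z), e.symm p = ins p.1 p.2 := fun p => rfl
    have hins_meas : Measurable (fun p : Z × (Fin k → Z) => ins p.1 p.2) := by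
      have h1 : (fun p : Z × (Fin k → Z) => ins p.1 p.2) = ⇑e.symm :=
        funext fun p => (hesymm p).symm
      rw [h1]; exact e.symm.measurable
    have hF : Measurable (fun p : Z × (Fin k → Z) => f (ins p.1 p.2)) := hf.comp hins_meas
    have hinsx_meas : ∀ r, Measurable (fun x : Z => f (ins x r)) := fun r =>
      hF.comp (measurable_id.prodMk measurable_const)
    have hinsr_meas : ∀ x, Measurable (fun r : Fin k → Z => f (ins x r)) := fun x =>
      hF.comp (measurable_const.prodMk measurable_id)
    set g : (Fin k → Z) → ℝ := fun r => ∫ x, f (ins x r) ∂D with hg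
    have hgmeas : Measurable g := hF.stronglyMeasurable.integral_prod_left'.measurable
    have hgB : ∀ r, |g r| ≤ B := by
      intro r
      refine (abs_int_le _).trans ?_
      calc ∫ x, |f (ins x r)| ∂D
          ≤ ∫ _, B ∂D := integral_mono
            (integrable_of_bounded' (hinsx_meas r).abs.aestronglyMeasurable
              (C := B) (fun x => by rw [abs_abs]; exact hB _))
            (integrable_const B) (fun x => hB _)
        _ = B := by simp
    -- bounded differences of g
    have hgdiff : ∀ (r : Fin k → Z) (j : Fin k) (z' : Z),
        |g (Function.update r j z') - g r| ≤ c := by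
      intro r j z'
      have hint1 : Integrable (fun x => f (ins x (Function.update r j z'))) D :=
        integrable_of_bounded' (hinsx_meas _).aestronglyMeasurable (C := B) (fun x => hB _)
      have hint2 : Integrable (fun x => f (ins x r)) D :=
        integrable_of_bounded' (hinsx_meas _).aestronglyMeasurable (C := B) (fun x => hB _)
      rw [hg]
      simp only
      rw [← integral_sub hint1 hint2]
      refine (abs_int_le _).trans ?_
      calc ∫ x, |f (ins x (Function.update r j z')) - f (ins x r)| ∂D
          ≤ ∫ _, c ∂D := by
            refine integral_mono (integrable_of_bounded'
              ((hint1.sub hint2).aestronglyMeasurable.norm)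
              (C := 2 * B) (fun x => by
                rw [abs_abs]
                calc |f (ins x (Function.update r j z')) - f (ins x r)|
                    ≤ |f (ins x (Function.update r j z'))| + |f (ins x r)| := abs_sub _ _
                  _ ≤ 2 * B := by linarith [hB (ins x (Function.update r j z')), hB (ins x r)]))
              (integrable_const c) (fun x => ?_)
            rw [hins]
            simp only
            rw [insertNth_update]
            exact hdiff _ _ _
        _ = c := by simp
    -- key per-r Hoeffding bound
    have key : ∀ r, ∫ x, exp (s * f (ins x r)) ∂D
        ≤ exp (s ^ 2 * c ^ 2 / 8) * exp (s * g r) := by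
      intro r
      set fr : Z → ℝ := fun x => f (ins x r) with hfr
      have hosc : ∀ x x', |fr x' - fr x| ≤ c := by
        intro x x'
        have : ins x' r = Function.update (ins x r) (Fin.last k) x' := by
          rw [hins]; simp only; rw [Fin.update_insertNth]
        rw [hfr]; simp only [this]
        exact hdiff _ _ _
      set a : ℝ := sInf (Set.range fr) with ha
      obtain ⟨x₀⟩ : Nonempty Z := inferInstance
      have hbdd : BddBelow (Set.range fr) := by
        refine ⟨fr x₀ - c, fun v hv => ?_⟩
        obtain ⟨x', rfl⟩ := hv
        have := hosc x₀ x'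
        have := abs_le.1 this
        linarith [this.1]
      have hne : (Set.range fr).Nonempty := ⟨fr x₀, Set.mem_range_self x₀⟩
      have haf : ∀ x, a ≤ fr x := fun x => csInf_le hbdd (Set.mem_range_self x)
      have hfb : ∀ x, fr x ≤ a + c := by
        intro x
        have : fr x - c ≤ a := by
          refine le_csInf hne (fun v hv => ?_)
          obtain ⟨x', rfl⟩ := hv
          have := abs_le.1 (hosc x' x)
          linarith [this.2]
        linarith
      have hH := hoeffding_lemma D (hinsx_meas r) (a := a) (b := a + c)
        (by linarith) (fun x => ⟨haf x, hfb x⟩) s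
      calc ∫ x, exp (s * f (ins x r)) ∂D
          ≤ exp (s * g r + s ^ 2 * (a + c - a) ^ 2 / 8) := hH
        _ = exp (s ^ 2 * c ^ 2 / 8) * exp (s * g r) := by
            rw [← exp_add]; ring_nf
    -- integrability on the product
    have hprod_int : Integrable (fun p : Z × (Fin k → Z) => exp (s * f (ins p.1 p.2)))
        (D.prod ν) := exp_mul_integrable _ hF.aestronglyMeasurable (fun p => hB _) s
    have hf_prod_int : Integrable (fun p : Z × (Fin k → Z) => f (ins p.1 p.2)) (D.prod ν) :=
      integrable_of_bounded' hF.aestronglyMeasurable (C := B) (fun p => hB _)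
    have hgint : ∫ r, g r ∂ν = ∫ S, f S ∂μ := by
      rw [← mps.integral_comp e.symm.measurableEmbedding f]
      have h1 : ∫ p, f (e.symm p) ∂(D.prod ν) = ∫ p : Z × (Fin k → Z), f (ins p.1 p.2) ∂(D.prod ν) := rfl
      rw [h1, integral_prod _ hf_prod_int]
      exact (integral_integral_swap (f := fun x r => f (ins x r)) hf_prod_int).symm ▸ rfl
    calc ∫ S, exp (s * f S) ∂μ
        = ∫ p : Z × (Fin k → Z), exp (s * f (ins p.1 p.2)) ∂(D.prod ν) :=
          (mps.integral_comp e.symm.measurableEmbedding (fun S => exp (s * f S))).symm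
      _ = ∫ x, ∫ r, exp (s * f (ins x r)) ∂ν ∂D := integral_prod _ hprod_int
      _ = ∫ r, ∫ x, exp (s * f (ins x r)) ∂D ∂ν :=
          integral_integral_swap (f := fun x r => exp (s * f (ins x r))) hprod_int
      _ ≤ ∫ r, exp (s ^ 2 * c ^ 2 / 8) * exp (s * g r) ∂ν := by
          refine integral_mono ?_ ?_ key
          · exact hprod_int.integral_prod_right
          · exact (exp_mul_integrable _ hgmeas.aestronglyMeasurable hgB s).const_mul _
      _ = exp (s ^ 2 * c ^ 2 / 8) * ∫ r, exp (s * g r) ∂ν := integral_const_mul _ _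
      _ ≤ exp (s ^ 2 * c ^ 2 / 8) * exp (s * ∫ r, g r ∂ν + s ^ 2 * k * c ^ 2 / 8) := by
          refine mul_le_mul_of_nonneg_left ?_ (exp_pos _).le
          exact IH g hgmeas B hgB c hc (fun S i z' => hgdiff S i z') s
      _ = exp (s * ∫ S, f S ∂μ + s ^ 2 * (k + 1 : ℕ) * c ^ 2 / 8) := by
          rw [← exp_add, hgint]
          congr 1
          push_cast
          ring

lemma mcdiarmid_tail {Z : Type*} [MeasurableSpace Z] [Nonempty Z] (D : Measure Z)
    [IsProbabilityMeasure D] (k : ℕ) (hk : 0 < k) (f : (Fin k → Z) → ℝ)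
    (hf : Measurable f) (B : ℝ) (hB : ∀ S, |f S| ≤ B) (c : ℝ) (hc : 0 < c)
    (hdiff : ∀ S i z', |f (Function.update S i z') - f S| ≤ c) (t : ℝ) (ht : 0 < t) :
    (Measure.pi fun _ : Fin k => D)
      {S | (∫ S', f S' ∂(Measure.pi fun _ : Fin k => D)) + t ≤ f S}
      ≤ ENNReal.ofReal (exp (-2 * t ^ 2 / (k * c ^ 2))) := by
  set μ : Measure (Fin k → Z) := Measure.pi fun _ : Fin k => D with hμ
  set M : ℝ := ∫ S', f S' ∂μ with hM
  set X : (Fin k → Z) → ℝ := fun S => f S - M with hX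
  set s : ℝ := 4 * t / (k * c ^ 2) with hs
  have hkc : (0:ℝ) < k * c ^ 2 := by positivity
  have hs0 : 0 ≤ s := by positivity
  have hXmeas : Measurable X := hf.sub measurable_const
  have hXB : ∀ S, |X S| ≤ B + |M| := by
    intro S
    calc |X S| ≤ |f S| + |M| := abs_sub _ _
      _ ≤ B + |M| := by linarith [hB S]
  have hint : Integrable (fun S => exp (s * X S)) μ :=
    exp_mul_integrable _ hXmeas.aestronglyMeasurable hXB s
  have hcher := measure_ge_le_exp_mul_mgf (μ := μ) (X := X) t hs0 hint
  -- bound the mgf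
  have hmgf : mgf X μ s ≤ exp (s ^ 2 * k * c ^ 2 / 8) := by
    have h1 := mcdiarmid_mgf D k f hf B hB c hc.le hdiff s
    have h2 : mgf X μ s = (∫ S, exp (s * f S) ∂μ) * exp (-(s * M)) := by
      have hpt : (fun S => exp (s * X S)) = fun S => exp (s * f S) * exp (-(s * M)) := by
        funext S
        rw [← exp_add]
        congr 1
        simp only [hX]
        ring
      rw [mgf, hpt, integral_mul_const]
    rw [h2]
    calc (∫ S, exp (s * f S) ∂μ) * exp (-(s * M))
        ≤ exp (s * M + s ^ 2 * k * c ^ 2 / 8) * exp (-(s * M)) :=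
          mul_le_mul_of_nonneg_right h1 (exp_pos _).le
      _ = exp (s ^ 2 * k * c ^ 2 / 8) := by rw [← exp_add]; ring_nf
  have hfin : (μ {S | M + t ≤ f S}).toReal ≤ exp (-2 * t ^ 2 / (k * c ^ 2)) := by
    have hset : {S | M + t ≤ f S} = {S | t ≤ X S} := by
      ext S; simp [hX]; constructor <;> intro h <;> linarith
    rw [hset]
    refine hcher.trans ?_
    calc exp (-s * t) * mgf X μ s ≤ exp (-s * t) * exp (s ^ 2 * k * c ^ 2 / 8) :=
          mul_le_mul_of_nonneg_left hmgf (exp_pos _).le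
      _ = exp (-s * t + s ^ 2 * k * c ^ 2 / 8) := by rw [← exp_add]
      _ = exp (-2 * t ^ 2 / (k * c ^ 2)) := by
          congr 1
          rw [hs]
          field_simp
          ring
  rw [← ENNReal.ofReal_toReal (measure_ne_top μ _)]
  exact ENNReal.ofReal_le_ofReal hfin

lemma expectation_bound {Z : Type*} [MeasurableSpace Z] [Nonempty Z] (D : Measure Z)
    [IsProbabilityMeasure D] (m : ℕ) (hm : 0 < m)
    (ℓ : (Fin m → Z) → Z → ℝ)
    (hℓmeas : Measurable fun p : (Fin m → Z) × Z => ℓ p.1 p.2)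
    (B : ℝ) (hB : ∀ S z, |ℓ S z| ≤ B) (ε : ℝ) (hε : 0 ≤ ε)
    (hu : ∀ (S : Fin m → Z) (i : Fin m) (z' z : Z),
      |ℓ (Function.update S i z') z - ℓ S z| ≤ ε)
    (j : Fin m) :
    ∫ S, (∫ z, ℓ S z ∂D) ∂(Measure.pi fun _ : Fin m => D)
      ≤ (∫ S, ℓ S (S j) ∂(Measure.pi fun _ : Fin m => D)) + ε := by
  obtain ⟨k, rfl⟩ : ∃ k, m = k + 1 := ⟨m - 1, (Nat.succ_pred_eq_of_pos hm).symm⟩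
  set μ : Measure (Fin (k+1) → Z) := Measure.pi fun _ : Fin (k+1) => D with hμ
  set ν : Measure (Fin k → Z) := Measure.pi fun _ : Fin k => D with hν
  set e := MeasurableEquiv.piFinSuccAbove (fun _ : Fin (k + 1) => Z) j with he
  have mp : MeasurePreserving e.symm (D.prod ν) μ :=
    (measurePreserving_piFinSuccAbove (fun _ : Fin (k + 1) => D) j).symm e
  set ins : Z → (Fin k → Z) → (Fin (k+1) → Z) :=
    fun x r => (j.insertNth x r : Fin (k+1) → Z) with hins
  have hesymm : ∀ p : Z × (Fin k → Z), e.symm p = ins p.1 p.2 := fun p => rfl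
  have hins_meas : Measurable (fun p : Z × (Fin k → Z) => ins p.1 p.2) := by
    have h1 : (fun p : Z × (Fin k → Z) => ins p.1 p.2) = ⇑e.symm :=
      funext fun p => (hesymm p).symm
    rw [h1]; exact e.symm.measurable
  have hImeas : Measurable (fun S : Fin (k+1) → Z => ∫ z, ℓ S z ∂D) :=
    hℓmeas.stronglyMeasurable.integral_prod_right'.measurable
  have hIabs : ∀ S : Fin (k+1) → Z, |∫ z, ℓ S z ∂D| ≤ B := by
    intro S
    refine (abs_int_le _).trans ?_
    have hzmeas : Measurable (fun z => ℓ S z) :=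
      hℓmeas.comp (measurable_const.prodMk measurable_id)
    calc ∫ z, |ℓ S z| ∂D ≤ ∫ _, B ∂D :=
          integral_mono (integrable_of_bounded' hzmeas.abs.aestronglyMeasurable
            (C := B) (fun z => by rw [abs_abs]; exact hB S z))
            (integrable_const _) (fun z => hB S z)
      _ = B := by simp
  -- K q = loss of the training set with q.1 inserted, evaluated at q.1
  set K : Z × (Fin k → Z) → ℝ := fun q => ℓ (ins q.1 q.2) q.1 with hK
  have hKmeas : Measurable K :=
    hℓmeas.comp (hins_meas.prodMk measurable_fst)
  have hKabs : ∀ q, |K q| ≤ B := fun q => hB _ _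
  set H : (Fin k → Z) → ℝ := fun r => ∫ x, K (x, r) ∂D with hH
  have hHmeas : Measurable H := hKmeas.stronglyMeasurable.integral_prod_left'.measurable
  have hHabs : ∀ r, |H r| ≤ B := by
    intro r
    refine (abs_int_le _).trans ?_
    have hxm : Measurable (fun x => K (x, r)) :=
      hKmeas.comp (measurable_id.prodMk measurable_const)
    calc ∫ x, |K (x, r)| ∂D ≤ ∫ _, B ∂D :=
          integral_mono (integrable_of_bounded' hxm.abs.aestronglyMeasurable
            (C := B) (fun x => by rw [abs_abs]; exact hKabs _))
            (integrable_const _) (fun x => hKabs _)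
      _ = B := by simp
  -- Step 1: rewrite both sides through the equivalence
  have hstep1 : ∫ S, (∫ z, ℓ S z ∂D) ∂μ
      = ∫ p, (∫ z, ℓ (ins p.1 p.2) z ∂D) ∂(D.prod ν) :=
    (mp.integral_comp e.symm.measurableEmbedding (fun S => ∫ z, ℓ S z ∂D)).symm
  have hstep6 : ∫ p, K p ∂(D.prod ν) = ∫ S, ℓ S (S j) ∂μ := by
    rw [← mp.integral_comp e.symm.measurableEmbedding (fun S => ℓ S (S j))]
    refine integral_congr_ae (Filter.Eventually.of_forall (fun p => ?_))
    show ℓ (ins p.1 p.2) p.1 = ℓ (e.symm p) (e.symm p j)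
    rw [hesymm]
    congr 1
    simp [hins]
  -- Step 2: pointwise comparison
  have hstep2 : ∀ p : Z × (Fin k → Z),
      (∫ z, ℓ (ins p.1 p.2) z ∂D) ≤ H p.2 + ε := by
    intro p
    have hptwise : ∀ z, ℓ (ins p.1 p.2) z ≤ K (z, p.2) + ε := by
      intro z
      have hupd : ins z p.2 = Function.update (ins p.1 p.2) j z := by
        rw [hins]
        simp only
        rw [Fin.update_insertNth]
      have h1 := hu (ins p.1 p.2) j z z
      rw [← hupd] at h1
      have h2 := (abs_le.1 h1).1
      rw [hK]
      simp only
      linarith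
    have hzm1 : Measurable (fun z => ℓ (ins p.1 p.2) z) :=
      hℓmeas.comp (measurable_const.prodMk measurable_id)
    have hzm2 : Measurable (fun z => K (z, p.2)) :=
      hKmeas.comp (measurable_id.prodMk measurable_const)
    calc ∫ z, ℓ (ins p.1 p.2) z ∂D
        ≤ ∫ z, (K (z, p.2) + ε) ∂D :=
          integral_mono (integrable_of_bounded' hzm1.aestronglyMeasurable
            (C := B) (fun z => hB _ _))
            ((integrable_of_bounded' hzm2.aestronglyMeasurable
              (C := B) (fun z => hKabs _)).add (integrable_const _)) hptwise
      _ = H p.2 + ε := by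
          rw [integral_add (integrable_of_bounded' hzm2.aestronglyMeasurable
            (C := B) (fun z => hKabs _)) (integrable_const _)]
          simp [hH]
  -- Step 3: integrate the comparison over the product
  have hLmeas : Measurable (fun p : Z × (Fin k → Z) => ∫ z, ℓ (ins p.1 p.2) z ∂D) := by
    have h1 : (fun p : Z × (Fin k → Z) => ∫ z, ℓ (ins p.1 p.2) z ∂D)
        = (fun S => ∫ z, ℓ S z ∂D) ∘ ⇑e.symm := rfl
    rw [h1]; exact hImeas.comp e.symm.measurable
  have hHsnd : Measurable (fun p : Z × (Fin k → Z) => H p.2) :=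
    hHmeas.comp measurable_snd
  have hstep3 : ∫ p, (∫ z, ℓ (ins p.1 p.2) z ∂D) ∂(D.prod ν)
      ≤ (∫ p : Z × (Fin k → Z), H p.2 ∂(D.prod ν)) + ε := by
    calc ∫ p, (∫ z, ℓ (ins p.1 p.2) z ∂D) ∂(D.prod ν)
        ≤ ∫ p : Z × (Fin k → Z), (H p.2 + ε) ∂(D.prod ν) :=
          integral_mono (integrable_of_bounded' hLmeas.aestronglyMeasurable
            (C := B) (fun p => hIabs _))
            ((integrable_of_bounded' hHsnd.aestronglyMeasurable
              (C := B) (fun p => hHabs _)).add (integrable_const _)) hstep2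
      _ = (∫ p : Z × (Fin k → Z), H p.2 ∂(D.prod ν)) + ε := by
          rw [integral_add (integrable_of_bounded'
            hHsnd.aestronglyMeasurable
            (C := B) (fun p => hHabs _)) (integrable_const _)]
          simp
  -- Step 4: the x-coordinate integrates out
  have hstep4 : ∫ p : Z × (Fin k → Z), H p.2 ∂(D.prod ν) = ∫ r, H r ∂ν := by
    rw [integral_prod _ (integrable_of_bounded'
      hHsnd.aestronglyMeasurable (C := B) (fun p => hHabs _))]
    simp
  -- Step 5: Fubini swap
  have hKint : Integrable K (D.prod ν) :=
    integrable_of_bounded' hKmeas.aestronglyMeasurable (C := B) hKabs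
  have hstep5 : ∫ r, H r ∂ν = ∫ p, K p ∂(D.prod ν) := by
    rw [integral_prod _ hKint]
    exact (integral_integral_swap (f := fun x r => K (x, r)) hKint).symm
  rw [hstep1, ← hstep6, ← hstep5, ← hstep4]
  exact hstep3

lemma ofFn_update_eraseIdx {Z : Type*} {m : ℕ} (S : Fin m → Z) (i : Fin m) (z' : Z) :
    (List.ofFn (Function.update S i z')).eraseIdx i.val
      = (List.ofFn S).eraseIdx i.val := by
  apply List.ext_getElem
  · simp [List.length_eraseIdx]
  · intro j h1 h2
    rw [List.getElem_eraseIdx, List.getElem_eraseIdx]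
    split
    · next hji =>
      rw [List.getElem_ofFn, List.getElem_ofFn]
      apply Function.update_of_ne
      intro hEq
      rw [Fin.ext_iff] at hEq
      simp at hEq
      omega
    · next hji =>
      rw [List.getElem_ofFn, List.getElem_ofFn]
      apply Function.update_of_ne
      intro hEq
      rw [Fin.ext_iff] at hEq
      simp at hEq
      omega


end Auxiliary


/-- **Generalization vs. stability (Theorem 2).**
Let `G` be a symmetric real-valued structured prediction algorithm trained on
`m` i.i.d. samples from `D`, with τ-smooth point-wise cost, point-wise loss in
`[0, γ]`, and removal-based function stability `Δ̄` holding for every training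
set (including replaced ones).  Then for any `δ ∈ (0,1)`, with probability at
least `1 − δ` over the draw of the training set `S`,
`R(f) ≤ R_e(f) + 2τΔ̄ + ((4m − 2)τΔ̄ + γ)√(ln(1/δ)/(2m))` where `f = G_S`. -/

theorem generalization_vs_stability
    {Z Ytag : Type*} [MeasurableSpace Z] (D : Measure Z) [IsProbabilityMeasure D]
    (m n : ℕ) (hm : 0 < m) (hn : 0 < n)
    (G : List Z → Z → Fin n → ℝ)   -- learning algorithm on training lists
    (y : Z → Fin n → Ytag)          -- gold tags of a sample
    (c : ℝ → Ytag → ℝ) (τ γ Δ : ℝ) (hτ : 0 ≤ τ)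
    (hsym : ∀ S S' : List Z, S.Perm S' → G S = G S')
    (hsmooth : ∀ (a b : ℝ) (t : Ytag), |c a t - c b t| ≤ τ * |a - b|)
    (hbound : ∀ (S' : List Z) (z : Z) (k : Fin n),
      0 ≤ c (G S' z k) (y z k) ∧ c (G S' z k) (y z k) ≤ γ)
    (hstab : ∀ (S' : List Z) (i : ℕ) (z : Z) (k : Fin n),
      |G S' z k - G (S'.eraseIdx i) z k| ≤ Δ)
    -- measurability of the loss as a function of the training set and the sample
    (hmeas : Measurable
      (fun p : (Fin m → Z) × Z =>
        ∑ k : Fin n, c (G (List.ofFn p.1) p.2 k) (y p.2 k)))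
    (δ : ℝ) (hδ0 : 0 < δ) (hδ1 : δ < 1) :
    ENNReal.ofReal (1 - δ) ≤
      (Measure.pi fun _ : Fin m => D)
        {S : Fin m → Z |
          (∫ z, ∑ k : Fin n, c (G (List.ofFn S) z k) (y z k) ∂D) / (n : ℝ)
            ≤ (1 / ((m : ℝ) * n)) *
                (∑ j : Fin m, ∑ k : Fin n,
                  c (G (List.ofFn S) (S j) k) (y (S j) k))
              + 2 * τ * Δ
              + ((4 * (m : ℝ) - 2) * τ * Δ + γ) *
                  Real.sqrt (Real.log (1 / δ) / (2 * m))} := by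
  -- nonemptiness of Z
  have hZne : Nonempty Z := by
    by_contra h
    rw [not_nonempty_iff] at h
    have h1 : D Set.univ = 1 := measure_univ
    rw [Set.univ_eq_empty_iff.2 h] at h1
    simp at h1
  haveI := hZne
  obtain ⟨z₀⟩ := id hZne
  have k₀ : Fin n := ⟨0, hn⟩
  -- sign facts
  have hΔ0 : 0 ≤ Δ := le_trans (abs_nonneg _) (hstab [] 0 z₀ k₀)
  have hγ0 : 0 ≤ γ := le_trans (hbound [] z₀ k₀).1 (hbound [] z₀ k₀).2
  have hn' : (0:ℝ) < n := by exact_mod_cast hn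
  have hm' : (0:ℝ) < m := by exact_mod_cast hm
  -- notation
  set μ : Measure (Fin m → Z) := Measure.pi fun _ : Fin m => D with hμdef
  set ℓ : (Fin m → Z) → Z → ℝ :=
    fun S z => ∑ k : Fin n, c (G (List.ofFn S) z k) (y z k) with hℓdef
  have hℓmeas : Measurable (fun p : (Fin m → Z) × Z => ℓ p.1 p.2) := hmeas
  have hℓz_meas : ∀ S, Measurable (fun z => ℓ S z) := fun S =>
    hℓmeas.comp (measurable_const.prodMk measurable_id)
  have hℓ0 : ∀ S z, 0 ≤ ℓ S z := fun S z =>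
    Finset.sum_nonneg (fun k _ => (hbound _ _ _).1)
  have hℓγ : ∀ S z, ℓ S z ≤ n * γ := by
    intro S z
    calc ℓ S z ≤ ∑ _k : Fin n, γ :=
          Finset.sum_le_sum (fun k _ => (hbound _ _ _).2)
      _ = n * γ := by rw [Finset.sum_const]; simp [nsmul_eq_mul]
  have hℓabs : ∀ S z, |ℓ S z| ≤ n * γ := fun S z => by
    rw [abs_of_nonneg (hℓ0 S z)]; exact hℓγ S z
  -- stability of G under single replacement
  have hGu : ∀ (S : Fin m → Z) (i : Fin m) (z' z : Z) (k : Fin n),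
      |G (List.ofFn (Function.update S i z')) z k - G (List.ofFn S) z k| ≤ 2 * Δ := by
    intro S i z' z k
    have h1 := hstab (List.ofFn (Function.update S i z')) i.val z k
    have h2 := hstab (List.ofFn S) i.val z k
    rw [ofFn_update_eraseIdx] at h1
    calc |G (List.ofFn (Function.update S i z')) z k - G (List.ofFn S) z k|
        ≤ |G (List.ofFn (Function.update S i z')) z k
            - G ((List.ofFn S).eraseIdx i.val) z k|
          + |G ((List.ofFn S).eraseIdx i.val) z k - G (List.ofFn S) z k| := by
          have := abs_sub_le (G (List.ofFn (Function.update S i z')) z k)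
            (G ((List.ofFn S).eraseIdx i.val) z k) (G (List.ofFn S) z k)
          exact this
      _ ≤ Δ + Δ := add_le_add h1 (by rw [abs_sub_comm]; exact h2)
      _ = 2 * Δ := by ring
  -- stability of the loss under single replacement
  have hℓu : ∀ (S : Fin m → Z) (i : Fin m) (z' z : Z),
      |ℓ (Function.update S i z') z - ℓ S z| ≤ 2 * n * τ * Δ := by
    intro S i z' z
    rw [hℓdef]
    simp only
    rw [← Finset.sum_sub_distrib]
    refine (Finset.abs_sum_le_sum_abs _ _).trans ?_
    calc ∑ k : Fin n, |c (G (List.ofFn (Function.update S i z')) z k) (y z k)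
            - c (G (List.ofFn S) z k) (y z k)|
        ≤ ∑ _k : Fin n, τ * (2 * Δ) := by
          refine Finset.sum_le_sum (fun k _ => ?_)
          refine (hsmooth _ _ _).trans ?_
          exact mul_le_mul_of_nonneg_left (hGu S i z' z k) hτ
      _ = n * (τ * (2 * Δ)) := by rw [Finset.sum_const]; simp [nsmul_eq_mul]
      _ = 2 * n * τ * Δ := by ring
  -- risk and empirical risk (times n)
  set I : (Fin m → Z) → ℝ := fun S => ∫ z, ℓ S z ∂D with hIdef
  set Emp : (Fin m → Z) → ℝ := fun S => ∑ j : Fin m, ℓ S (S j) with hEmpdef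
  set Φ : (Fin m → Z) → ℝ := fun S => I S - (1 / (m:ℝ)) * Emp S with hΦdef
  have hImeas : Measurable I := hℓmeas.stronglyMeasurable.integral_prod_right'.measurable
  have hEmpmeas : Measurable Emp := by
    apply Finset.measurable_sum
    intro j _
    exact hℓmeas.comp (measurable_id.prodMk (measurable_pi_apply j))
  have hΦmeas : Measurable Φ := hImeas.sub (hEmpmeas.const_mul _)
  have hIabs : ∀ S, |I S| ≤ n * γ := by
    intro S
    refine (abs_int_le _).trans ?_
    calc ∫ z, |ℓ S z| ∂D ≤ ∫ _, (n:ℝ) * γ ∂D :=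
          integral_mono (integrable_of_bounded' (hℓz_meas S).abs.aestronglyMeasurable
            (C := n * γ) (fun z => by rw [abs_abs]; exact hℓabs S z))
            (integrable_const _) (fun z => hℓabs S z)
      _ = n * γ := by simp
  have hEmpabs : ∀ S, |Emp S| ≤ m * (n * γ) := by
    intro S
    refine (Finset.abs_sum_le_sum_abs _ _).trans ?_
    calc ∑ j : Fin m, |ℓ S (S j)| ≤ ∑ _j : Fin m, (n:ℝ) * γ :=
          Finset.sum_le_sum (fun j _ => hℓabs S (S j))
      _ = m * (n * γ) := by rw [Finset.sum_const]; simp [nsmul_eq_mul]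
  have hΦabs : ∀ S, |Φ S| ≤ 2 * (n * γ) := by
    intro S
    rw [hΦdef]
    simp only
    refine (abs_sub _ _).trans ?_
    have h2 : |(1 / (m:ℝ)) * Emp S| ≤ n * γ := by
      rw [abs_mul, abs_of_pos (by positivity : (0:ℝ) < 1 / (m:ℝ))]
      calc (1 / (m:ℝ)) * |Emp S| ≤ (1 / (m:ℝ)) * ((m:ℝ) * (n * γ)) :=
            mul_le_mul_of_nonneg_left (hEmpabs S) (by positivity)
        _ = n * γ := by field_simp
    linarith [hIabs S]
  -- bounded differences of Φ
  set Cd : ℝ := (n:ℝ) * ((4 * (m:ℝ) - 2) * τ * Δ + γ) / (m:ℝ) with hCd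
  have hΦdiff : ∀ (S : Fin m → Z) (i : Fin m) (z' : Z),
      |Φ (Function.update S i z') - Φ S| ≤ Cd := by
    intro S i z'
    set u := Function.update S i z' with hu
    have hIdiff : |I u - I S| ≤ 2 * n * τ * Δ := by
      rw [hIdef]
      simp only
      rw [← integral_sub
        (integrable_of_bounded' (hℓz_meas u).aestronglyMeasurable (C := n*γ) (hℓabs u))
        (integrable_of_bounded' (hℓz_meas S).aestronglyMeasurable (C := n*γ) (hℓabs S))]
      refine (abs_int_le _).trans ?_
      calc ∫ z, |ℓ u z - ℓ S z| ∂D ≤ ∫ _, 2 * (n:ℝ) * τ * Δ ∂D := by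
            refine integral_mono (integrable_of_bounded'
              (((hℓz_meas u).sub (hℓz_meas S)).abs.aestronglyMeasurable)
              (C := 2 * n * τ * Δ) (fun z => by rw [abs_abs]; exact hℓu S i z' z))
              (integrable_const _) (fun z => hℓu S i z' z)
        _ = 2 * n * τ * Δ := by simp
    have hEmpdiff : |Emp u - Emp S| ≤ (n:ℝ) * γ + ((m:ℝ) - 1) * (2 * n * τ * Δ) := by
      rw [hEmpdef]
      simp only
      rw [← Finset.sum_sub_distrib]
      refine (Finset.abs_sum_le_sum_abs _ _).trans ?_
      have hterm : ∀ j : Fin m, |ℓ u (u j) - ℓ S (S j)|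
          ≤ if j = i then (n:ℝ) * γ else 2 * n * τ * Δ := by
        intro j
        by_cases hj : j = i
        · rw [if_pos hj]
          rw [abs_le]
          constructor
          · linarith [hℓ0 u (u j), hℓγ S (S j)]
          · linarith [hℓγ u (u j), hℓ0 S (S j)]
        · rw [if_neg hj]
          have huj : u j = S j := Function.update_of_ne hj _ _
          rw [huj]
          exact hℓu S i z' (S j)
      refine (Finset.sum_le_sum (fun j _ => hterm j)).trans ?_
      have hsplit : ∑ j : Fin m, (if j = i then (n:ℝ) * γ else 2 * n * τ * Δ)
          = (n:ℝ) * γ + ((m:ℝ) - 1) * (2 * n * τ * Δ) := by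
        rw [← Finset.add_sum_erase Finset.univ _ (Finset.mem_univ i)]
        rw [if_pos rfl]
        congr 1
        rw [Finset.sum_congr rfl (fun j hj => if_neg (Finset.ne_of_mem_erase hj)),
          Finset.sum_const, Finset.card_erase_of_mem (Finset.mem_univ i)]
        rw [Finset.card_univ, Fintype.card_fin, nsmul_eq_mul]
        congr 1
        push_cast [Nat.cast_sub hm]
        ring
      rw [hsplit]
    rw [hΦdef]
    simp only
    have expand : I u - 1 / (m:ℝ) * Emp u - (I S - 1 / (m:ℝ) * Emp S)
        = (I u - I S) - (1 / (m:ℝ)) * (Emp u - Emp S) := by ring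
    rw [expand]
    refine (abs_sub _ _).trans ?_
    have h3 : |(1 / (m:ℝ)) * (Emp u - Emp S)|
        ≤ (1 / (m:ℝ)) * ((n:ℝ) * γ + ((m:ℝ) - 1) * (2 * n * τ * Δ)) := by
      rw [abs_mul, abs_of_pos (by positivity : (0:ℝ) < 1 / (m:ℝ))]
      exact mul_le_mul_of_nonneg_left hEmpdiff (by positivity)
    have h4 : 2 * (n:ℝ) * τ * Δ
        + (1 / (m:ℝ)) * ((n:ℝ) * γ + ((m:ℝ) - 1) * (2 * n * τ * Δ)) = Cd := by
      rw [hCd]; field_simp; ring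
    linarith [hIdiff, h3]
  -- expectation bound for Φ
  have hIint : Integrable I μ :=
    integrable_of_bounded' hImeas.aestronglyMeasurable (C := n * γ) hIabs
  have hterm_int : ∀ j : Fin m, Integrable (fun S => ℓ S (S j)) μ := fun j =>
    integrable_of_bounded'
      (hℓmeas.comp (measurable_id.prodMk (measurable_pi_apply j))).aestronglyMeasurable
      (C := n * γ) (fun S => hℓabs S (S j))
  have hEmpint : Integrable Emp μ := by
    rw [hEmpdef]
    exact integrable_finset_sum _ (fun j _ => hterm_int j)
  have hEΦ : ∫ S, Φ S ∂μ ≤ 2 * n * τ * Δ := by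
    have hsplit : ∫ S, Φ S ∂μ
        = (∫ S, I S ∂μ) - (1 / (m:ℝ)) * ∑ j : Fin m, ∫ S, ℓ S (S j) ∂μ := by
      rw [hΦdef]
      simp only
      rw [integral_sub hIint (hEmpint.const_mul _), integral_const_mul]
      congr 1
      congr 1
      rw [hEmpdef]
      exact integral_finset_sum _ (fun j _ => hterm_int j)
    have hj : ∀ j : Fin m, (∫ S, I S ∂μ) - 2 * n * τ * Δ ≤ ∫ S, ℓ S (S j) ∂μ := by
      intro j
      have := expectation_bound D m hm ℓ hℓmeas (n * γ) hℓabs (2 * n * τ * Δ)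
        (by positivity) hℓu j
      rw [hIdef]
      linarith [this]
    have hsum : (m:ℝ) * ((∫ S, I S ∂μ) - 2 * n * τ * Δ)
        ≤ ∑ j : Fin m, ∫ S, ℓ S (S j) ∂μ := by
      calc (m:ℝ) * ((∫ S, I S ∂μ) - 2 * n * τ * Δ)
          = ∑ _j : Fin m, ((∫ S, I S ∂μ) - 2 * n * τ * Δ) := by
            rw [Finset.sum_const]; simp [nsmul_eq_mul]
        _ ≤ ∑ j : Fin m, ∫ S, ℓ S (S j) ∂μ := Finset.sum_le_sum (fun j _ => hj j)
    rw [hsplit]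
    have h5 : (1 / (m:ℝ)) * ((m:ℝ) * ((∫ S, I S ∂μ) - 2 * n * τ * Δ))
        ≤ (1 / (m:ℝ)) * ∑ j : Fin m, ∫ S, ℓ S (S j) ∂μ :=
      mul_le_mul_of_nonneg_left hsum (by positivity)
    have h6 : (1 / (m:ℝ)) * ((m:ℝ) * ((∫ S, I S ∂μ) - 2 * n * τ * Δ))
        = (∫ S, I S ∂μ) - 2 * n * τ * Δ := by field_simp
    linarith
  -- final assembly
  set Q : ℝ := (4 * (m:ℝ) - 2) * τ * Δ + γ with hQdef
  have hQ0 : 0 ≤ Q := by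
    have h1 : (4:ℝ) * m - 2 ≥ 2 := by
      have : (1:ℝ) ≤ m := by exact_mod_cast hm
      linarith
    have h2 : 0 ≤ (4 * (m:ℝ) - 2) * τ * Δ := by
      apply mul_nonneg (mul_nonneg (by linarith) hτ) hΔ0
    rw [hQdef]
    linarith
  rcases eq_or_lt_of_le hQ0 with hQz | hQpos
  · -- degenerate case : everything is zero
    have hγz : γ = 0 := by
      have h1 : (4:ℝ) * m - 2 ≥ 2 := by
        have : (1:ℝ) ≤ m := by exact_mod_cast hm
        linarith
      have h2 : 0 ≤ (4 * (m:ℝ) - 2) * τ * Δ :=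
        mul_nonneg (mul_nonneg (by linarith) hτ) hΔ0
      rw [hQdef] at hQz
      linarith
    have hτΔ : τ * Δ = 0 := by
      have h1 : (4:ℝ) * m - 2 ≥ 2 := by
        have : (1:ℝ) ≤ m := by exact_mod_cast hm
        linarith
      have h2 : 0 ≤ (4 * (m:ℝ) - 2) * τ * Δ :=
        mul_nonneg (mul_nonneg (by linarith) hτ) hΔ0
      rw [hQdef] at hQz
      have h3 : (4 * (m:ℝ) - 2) * τ * Δ = 0 := by linarith
      have h4 : (4 * (m:ℝ) - 2) ≠ 0 := by linarith
      have := mul_eq_zero.1 h3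
      rcases this with h5 | h5
      · rcases mul_eq_zero.1 h5 with h6 | h6
        · exact absurd h6 h4
        · rw [h6]; ring
      · rw [h5]; ring
    have hczero : ∀ (S' : List Z) (z : Z) (k : Fin n),
        c (G S' z k) (y z k) = 0 := by
      intro S' z k
      have := hbound S' z k
      rw [hγz] at this
      linarith [this.1, this.2]
    have hset : {S : Fin m → Z |
          (∫ z, ∑ k : Fin n, c (G (List.ofFn S) z k) (y z k) ∂D) / (n : ℝ)
            ≤ (1 / ((m : ℝ) * n)) *
                (∑ j : Fin m, ∑ k : Fin n,
                  c (G (List.ofFn S) (S j) k) (y (S j) k))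
              + 2 * τ * Δ
              + Q * Real.sqrt (Real.log (1 / δ) / (2 * m))} = Set.univ := by
      ext S
      simp only [Set.mem_setOf_eq, Set.mem_univ, iff_true]
      have hL : (∫ z, ∑ k : Fin n, c (G (List.ofFn S) z k) (y z k) ∂D) = 0 := by
        have : (fun z => ∑ k : Fin n, c (G (List.ofFn S) z k) (y z k))
            = fun _ => (0:ℝ) := by
          funext z
          exact Finset.sum_eq_zero (fun k _ => hczero _ _ _)
        rw [this]
        simp
      have hR1 : (∑ j : Fin m, ∑ k : Fin n,
          c (G (List.ofFn S) (S j) k) (y (S j) k)) = 0 :=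
        Finset.sum_eq_zero (fun j _ => Finset.sum_eq_zero (fun k _ => hczero _ _ _))
      rw [hL, hR1, ← hQz]
      have h2 : 2 * τ * Δ = 0 := by rw [mul_assoc, hτΔ]; ring
      rw [h2]
      simp
    rw [hset]
    have : μ Set.univ = 1 := measure_univ
    rw [hμdef] at this
    rw [this]
    exact ENNReal.ofReal_le_one.2 (by linarith)
  · -- main case
    have hCdQ : Cd = (n:ℝ) * Q / (m:ℝ) := by rw [hCd]
    have hCdpos : 0 < Cd := by
      rw [hCdQ]
      exact div_pos (mul_pos hn' hQpos) hm'
    have hlogpos : 0 < Real.log (1 / δ) := by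
      apply Real.log_pos
      rw [lt_div_iff₀ hδ0, one_mul]
      exact hδ1
    set sq : ℝ := Real.sqrt (Real.log (1 / δ) / (2 * m)) with hsqdef
    have hsqpos : 0 < sq := Real.sqrt_pos.2 (by positivity)
    set t : ℝ := (n:ℝ) * (Q * sq) with htdef
    have htpos : 0 < t := by positivity
    have tail := mcdiarmid_tail D m hm Φ hΦmeas (2 * (n * γ)) hΦabs Cd hCdpos
      hΦdiff t htpos
    -- identify the exponential bound with δ
    have hexp : exp (-2 * t ^ 2 / (m * Cd ^ 2)) = δ := by
      have h1 : t ^ 2 = (n:ℝ) ^ 2 * Q ^ 2 * (Real.log (1 / δ) / (2 * m)) := by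
        rw [htdef, mul_pow, mul_pow, hsqdef, Real.sq_sqrt (by positivity)]
        ring
      have h2 : Cd ^ 2 = (n:ℝ) ^ 2 * Q ^ 2 / (m:ℝ) ^ 2 := by
        rw [hCdQ, div_pow, mul_pow]
      have h3 : -2 * t ^ 2 / (m * Cd ^ 2) = -Real.log (1 / δ) := by
        rw [h1, h2]
        have hQne : Q ≠ 0 := hQpos.ne'
        have hnne : (n:ℝ) ≠ 0 := hn'.ne'
        have hmne : (m:ℝ) ≠ 0 := hm'.ne'
        field_simp
      rw [h3, one_div, Real.log_inv, neg_neg, Real.exp_log hδ0]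
    -- the bad event
    set Bad : Set (Fin m → Z) := {S | (∫ S', Φ S' ∂μ) + t ≤ Φ S} with hBad
    have hBadmeas : MeasurableSet Bad := measurableSet_le measurable_const hΦmeas
    have hBadle : μ Bad ≤ ENNReal.ofReal δ := by
      have h := tail
      rw [hexp] at h
      exact h
    -- complement of the bad event is inside the target event
    have hsub : Badᶜ ⊆ {S : Fin m → Z |
          (∫ z, ∑ k : Fin n, c (G (List.ofFn S) z k) (y z k) ∂D) / (n : ℝ)
            ≤ (1 / ((m : ℝ) * n)) *
                (∑ j : Fin m, ∑ k : Fin n,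
                  c (G (List.ofFn S) (S j) k) (y (S j) k))
              + 2 * τ * Δ
              + Q * sq} := by
      intro S hS
      rw [Set.mem_compl_iff, hBad, Set.mem_setOf_eq, not_le] at hS
      have h1 : Φ S < 2 * n * τ * Δ + t := by linarith [hEΦ]
      have h2 : I S - (1 / (m:ℝ)) * Emp S < 2 * n * τ * Δ + t := by
        rw [hΦdef] at h1
        exact h1
      rw [Set.mem_setOf_eq]
      have hIS : I S = ∫ z, ∑ k : Fin n, c (G (List.ofFn S) z k) (y z k) ∂D := rfl
      have hEmpS : Emp S = ∑ j : Fin m, ∑ k : Fin n,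
          c (G (List.ofFn S) (S j) k) (y (S j) k) := rfl
      rw [← hIS, ← hEmpS]
      rw [div_le_iff₀ hn']
      have h3 : ((1 / ((m:ℝ) * n)) * Emp S + 2 * τ * Δ + Q * sq) * n
          = (1 / (m:ℝ)) * Emp S + 2 * n * τ * Δ + t := by
        rw [htdef]
        field_simp
      rw [h3]
      linarith
    -- measure arithmetic
    have hone : ENNReal.ofReal (1 - δ) = 1 - ENNReal.ofReal δ := by
      refine ENNReal.eq_sub_of_add_eq ENNReal.ofReal_ne_top ?_
      rw [← ENNReal.ofReal_add (by linarith) hδ0.le]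
      norm_num
    calc ENNReal.ofReal (1 - δ) = 1 - ENNReal.ofReal δ := hone
      _ ≤ 1 - μ Bad := tsub_le_tsub_left hBadle 1
      _ = μ Set.univ - μ Bad := by rw [measure_univ]
      _ = μ Badᶜ := (measure_compl hBadmeas (measure_ne_top _ _)).symm
      _ ≤ _ := measure_mono hsub
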